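/- arXiv:2603.07522 — 2 statements merged into one kernel-verified Lean document; each statement's English description precedes it below -/
import Mathlib

section
/- Let S_1, ..., S_k be exchangeable real-valued random variables and let q̂ be the ⌈(1-α)k⌉-th order statistic of S_1, ..., S_k. Then for each i, P(S_i ≤ q̂) ≥ 1 - α. -/
open MeasureTheory ENNReal NNReal

/-- The `r`-th order statistic (1-indexed, `r`-th smallest) of a finite family of reals. -/
noncomputable def orderStat (n r : ℕ) (v : Fin n → ℝ) : ℝ :=
  (List.insertionSort (· ≤ ·) (List.ofFn v)).getD (r - 1) 0

lemma countP_ofFn_eq_card {k : ℕ} (v : Fin k → ℝ) (x : ℝ) :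
    (List.ofFn v).countP (fun y => decide (y ≤ x))
      = (Finset.univ.filter fun j => v j ≤ x).card := by
  rw [List.ofFn_eq_map, List.countP_map, Fin.univ_def]
  simp only [Finset.filter, Finset.card, Multiset.filter_coe, Multiset.coe_card,
    List.countP_eq_length_filter]
  congr 1

lemma sorted_getD_le_iff (l : List ℝ) (hs : l.Pairwise (· ≤ ·)) (m : ℕ) (hm : m < l.length)
    (x : ℝ) : l.getD m 0 ≤ x ↔ m + 1 ≤ l.countP (fun y => decide (y ≤ x)) := by
  rw [List.getD_eq_getElem _ _ hm]
  constructor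
  · intro h
    have hsplit : l.countP (fun y => decide (y ≤ x))
        = (l.take (m+1)).countP (fun y => decide (y ≤ x))
          + (l.drop (m+1)).countP (fun y => decide (y ≤ x)) := by
      conv_lhs => rw [← l.take_append_drop (m+1)]
      rw [List.countP_append]
    have htake : (l.take (m+1)).countP (fun y => decide (y ≤ x)) = (l.take (m+1)).length := by
      rw [List.countP_eq_length]
      intro a ha
      obtain ⟨i, hi, rfl⟩ := List.mem_iff_getElem.1 ha
      rw [List.getElem_take]
      have hilen : i < l.length := lt_of_lt_of_le hi (by simp [List.length_take])
      have : l[i] ≤ l[m] := by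
        have him : i ≤ m := by
          have := hi; simp [List.length_take] at this; omega
        exact hs.rel_get_of_le (a := ⟨i, hilen⟩) (b := ⟨m, hm⟩) him
      simpa using this.trans h
    have hlt : (l.take (m+1)).length = m + 1 := by simp [List.length_take]; omega
    omega
  · intro h
    by_contra hx
    push_neg at hx
    have hsplit : l.countP (fun y => decide (y ≤ x))
        = (l.take m).countP (fun y => decide (y ≤ x))
          + (l.drop m).countP (fun y => decide (y ≤ x)) := by
      conv_lhs => rw [← l.take_append_drop m]
      rw [List.countP_append]
    have hdrop : (l.drop m).countP (fun y => decide (y ≤ x)) = 0 := by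
      rw [List.countP_eq_zero]
      intro a ha
      obtain ⟨i, hi, rfl⟩ := List.mem_iff_getElem.1 ha
      rw [List.getElem_drop]
      have hmi : m + i < l.length := by simp [List.length_drop] at hi; omega
      have : l[m] ≤ l[m+i] := hs.rel_get_of_le (a := ⟨m, hm⟩) (b := ⟨m+i, hmi⟩) (by simp)
      simp only [decide_eq_true_eq]
      push_neg
      exact lt_of_lt_of_le hx this
    have htake : (l.take m).countP (fun y => decide (y ≤ x)) ≤ m :=
      le_trans List.countP_le_length (by simp [List.length_take])
    omega

lemma orderStat_le_iff {k r : ℕ} (hr1 : 1 ≤ r) (hrk : r ≤ k) (v : Fin k → ℝ) (x : ℝ) :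
    orderStat k r v ≤ x ↔ r ≤ (Finset.univ.filter fun j => v j ≤ x).card := by
  set l := List.insertionSort (· ≤ ·) (List.ofFn v) with hl
  have hlen : l.length = k := by
    rw [hl, List.length_insertionSort, List.length_ofFn]
  have hm : r - 1 < l.length := by omega
  have hs : l.Pairwise (· ≤ ·) := List.pairwise_insertionSort _ _
  have hcount : l.countP (fun y => decide (y ≤ x))
      = (Finset.univ.filter fun j => v j ≤ x).card := by
    rw [(List.perm_insertionSort (· ≤ ·) (List.ofFn v)).countP_eq, countP_ofFn_eq_card]
  have := sorted_getD_le_iff l hs (r-1) hm x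
  rw [hcount] at this
  unfold orderStat
  rw [← hl, this]
  omega

lemma orderStat_comp_perm {k r : ℕ} (hr1 : 1 ≤ r) (hrk : r ≤ k) (v : Fin k → ℝ)
    (π : Equiv.Perm (Fin k)) : orderStat k r (fun j => v (π j)) = orderStat k r v := by
  have key : ∀ x : ℝ, orderStat k r (fun j => v (π j)) ≤ x ↔ orderStat k r v ≤ x := by
    intro x
    rw [orderStat_le_iff hr1 hrk, orderStat_le_iff hr1 hrk]
    have : (Finset.univ.filter fun j => v (π j) ≤ x).card
        = (Finset.univ.filter fun j => v j ≤ x).card := by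
      apply Finset.card_equiv π
      intro j
      simp
    rw [this]
  exact le_antisymm ((key _).2 le_rfl) ((key _).1 le_rfl)

lemma measurable_orderStat {k r : ℕ} (hr1 : 1 ≤ r) (hrk : r ≤ k) :
    Measurable (orderStat k r) := by
  apply measurable_of_Iic
  intro x
  have : orderStat k r ⁻¹' Set.Iic x
      = {v : Fin k → ℝ | r ≤ (Finset.univ.filter fun j => v j ≤ x).card} := by
    ext v
    simp [Set.mem_preimage, orderStat_le_iff hr1 hrk]
  rw [this]
  have hg : Measurable (fun v : Fin k → ℝ => (Finset.univ.filter fun j => v j ≤ x).card) := by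
    have : (fun v : Fin k → ℝ => (Finset.univ.filter fun j => v j ≤ x).card)
        = fun v => ∑ j : Fin k, if v j ≤ x then 1 else 0 := by
      funext v; exact Finset.card_filter _ _
    rw [this]
    apply Finset.measurable_sum
    intro j _
    exact Measurable.ite (measurableSet_le (measurable_pi_apply j) measurable_const)
      measurable_const measurable_const
  exact hg (MeasurableSet.of_discrete)

/-- For exchangeable scores `S_1, ..., S_k` and `q̂` the `⌈(1-α)k⌉`-th order
statistic, `P(S_i ≤ q̂) ≥ 1 - α` for each `i`. -/
theorem stmt0
    {Ω : Type*} [MeasurableSpace Ω] (μ : Measure Ω) [IsProbabilityMeasure μ]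
    (k : ℕ) (hk : 0 < k) (α : ℝ) (hα : α ∈ Set.Ioo (0 : ℝ) 1)
    (S : Fin k → Ω → ℝ) (hS : ∀ i, Measurable (S i))
    (hexch : ∀ π : Equiv.Perm (Fin k),
      Measure.map (fun ω => fun i => S (π i) ω) μ
        = Measure.map (fun ω => fun i => S i ω) μ)
    (i : Fin k) :
    ENNReal.ofReal (1 - α)
      ≤ μ {ω | S i ω ≤ orderStat k (Nat.ceil ((1 - α) * k)) (fun j => S j ω)} := by
  classical
  obtain ⟨hα0, hα1⟩ := hα
  set r : ℕ := Nat.ceil ((1 - α) * k) with hr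
  have hkR : (0:ℝ) < k := by exact_mod_cast hk
  have hr1 : 1 ≤ r := Nat.one_le_iff_ne_zero.2 (by
    have : (0:ℝ) < (1 - α) * k := by nlinarith
    simp [hr, Nat.ceil_eq_zero, not_le, this])
  have hrk : r ≤ k := by
    rw [hr, Nat.ceil_le]
    nlinarith
  set q : (Fin k → ℝ) → ℝ := orderStat k r with hqdef
  have hq : Measurable q := measurable_orderStat hr1 hrk
  set f : Ω → (Fin k → ℝ) := fun ω j => S j ω with hfdef
  have hf : Measurable f := measurable_pi_lambda _ (fun j => hS j)
  set C : Fin k → Set (Fin k → ℝ) := fun j => {v | v j ≤ q v} with hCdef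
  have hC : ∀ j, MeasurableSet (C j) := fun j =>
    measurableSet_le (measurable_pi_apply j) hq
  set A : Fin k → Set Ω := fun j => f ⁻¹' C j with hAdef
  have hA : ∀ j, MeasurableSet (A j) := fun j => hf (hC j)
  -- all A j have the same measure as A i
  have hAeq : ∀ j, μ (A j) = μ (A i) := by
    intro j
    set π : Equiv.Perm (Fin k) := Equiv.swap i j with hπ
    have hg : Measurable (fun ω => fun i' => S (π i') ω) :=
      measurable_pi_lambda _ (fun i' => hS (π i'))
    have h1 : (fun ω => fun i' => S (π i') ω) ⁻¹' C i = A j := by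
      ext ω
      simp only [Set.mem_preimage, hAdef, hCdef, Set.mem_setOf_eq]
      have hq2 : q (fun i' => S (π i') ω) = q (f ω) := by
        rw [hqdef]; exact orderStat_comp_perm hr1 hrk (f ω) π
      rw [hq2]
      have hswap : π i = j := by rw [hπ]; exact Equiv.swap_apply_left i j
      rw [hswap]
    have := hexch π
    calc μ (A j) = μ ((fun ω => fun i' => S (π i') ω) ⁻¹' C i) := by rw [h1]
      _ = (Measure.map (fun ω => fun i' => S (π i') ω) μ) (C i) :=
          (Measure.map_apply hg (hC i)).symm
      _ = (Measure.map (fun ω => fun i' => S i' ω) μ) (C i) := by rw [this]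
      _ = μ ((fun ω => fun i' => S i' ω) ⁻¹' C i) :=
          Measure.map_apply (measurable_pi_lambda _ hS) (hC i)
      _ = μ (A i) := rfl
  -- pointwise counting bound
  have hcount : ∀ ω, (r : ℝ≥0∞) ≤ ∑ j : Fin k, (A j).indicator (fun _ => (1:ℝ≥0∞)) ω := by
    intro ω
    have hcard : r ≤ (Finset.univ.filter fun j => ω ∈ A j).card := by
      have h2 : r ≤ (Finset.univ.filter fun j => (f ω) j ≤ q (f ω)).card :=
        (orderStat_le_iff hr1 hrk (f ω) (q (f ω))).1
          (le_of_eq (congrFun hqdef.symm (f ω)))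
      refine le_trans h2 (le_of_eq ?_)
      congr 1
    calc (r : ℝ≥0∞) ≤ ((Finset.univ.filter fun j => ω ∈ A j).card : ℝ≥0∞) := by
          exact_mod_cast hcard
      _ = ∑ j : Fin k, (A j).indicator (fun _ => (1:ℝ≥0∞)) ω := by
          rw [← Finset.sum_boole]
          exact Finset.sum_congr rfl (fun j _ => by simp [Set.indicator_apply])
  -- integrate
  have hsum : (r : ℝ≥0∞) ≤ ∑ j : Fin k, μ (A j) := by
    have h1 : (r : ℝ≥0∞) = ∫⁻ _, (r : ℝ≥0∞) ∂μ := by simp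
    have h2 : (∫⁻ ω, (r : ℝ≥0∞) ∂μ)
        ≤ ∫⁻ ω, ∑ j : Fin k, (A j).indicator (fun _ => (1:ℝ≥0∞)) ω ∂μ :=
      lintegral_mono hcount
    have h3 : (∫⁻ ω, ∑ j : Fin k, (A j).indicator (fun _ => (1:ℝ≥0∞)) ω ∂μ)
        = ∑ j : Fin k, ∫⁻ ω, (A j).indicator (fun _ => (1:ℝ≥0∞)) ω ∂μ :=
      lintegral_finset_sum _ (fun j _ => (measurable_const.indicator (hA j)))
    have h4 : ∀ j, (∫⁻ ω, (A j).indicator (fun _ => (1:ℝ≥0∞)) ω ∂μ) = μ (A j) := by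
      intro j
      rw [lintegral_indicator (hA j)]
      simp
    calc (r : ℝ≥0∞) = ∫⁻ _, (r : ℝ≥0∞) ∂μ := h1
      _ ≤ _ := h2
      _ = ∑ j : Fin k, ∫⁻ ω, (A j).indicator (fun _ => (1:ℝ≥0∞)) ω ∂μ := h3
      _ = ∑ j : Fin k, μ (A j) := Finset.sum_congr rfl (fun j _ => h4 j)
  have hsum2 : (r : ℝ≥0∞) ≤ (k : ℝ≥0∞) * μ (A i) := by
    calc (r : ℝ≥0∞) ≤ ∑ j : Fin k, μ (A j) := hsum
      _ = ∑ _j : Fin k, μ (A i) := Finset.sum_congr rfl (fun j _ => hAeq j)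
      _ = (k : ℝ≥0∞) * μ (A i) := by
          rw [Finset.sum_const, Finset.card_univ, Fintype.card_fin, nsmul_eq_mul]
  -- conclude
  have hfinal : ENNReal.ofReal (1 - α) ≤ μ (A i) := by
    have hdiv : (r : ℝ≥0∞) / (k : ℝ≥0∞) ≤ μ (A i) :=
      ENNReal.div_le_of_le_mul (by rwa [mul_comm] at hsum2)
    refine le_trans ?_ hdiv
    have hcast : (r : ℝ≥0∞) / (k : ℝ≥0∞) = ENNReal.ofReal ((r : ℝ) / (k : ℝ)) := by
      rw [ENNReal.ofReal_div_of_pos hkR, ENNReal.ofReal_natCast, ENNReal.ofReal_natCast]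
    rw [hcast]
    apply ENNReal.ofReal_le_ofReal
    rw [le_div_iff₀ hkR]
    exact le_trans (Nat.le_ceil _) (by exact_mod_cast le_refl (r:ℝ))
  exact hfinal
end

section
/- Let ℓ(·; z) be convex and G-Lipschitz for each z, let λ > 0, and define F_n(θ) = (1/n)Σ_{i=1}^n ℓ(θ; z_i) + (λ/2)‖θ‖², with minimizer θ̂_n, and similarly F_{n+1} with the additional point z_{n+1} and minimizer θ̂_{n+1}. Then ‖θ̂_{n+1} - θ̂_n‖₂ ≤ 2G/(λn). -/
open Filter Set Topology

private lemma growth_aux {E : Type*} [NormedAddCommGroup E] [InnerProductSpace ℝ E]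
    (g : E → ℝ) (hg : ConvexOn ℝ Set.univ g) (lam : ℝ) (a : E)
    (hmin : ∀ x, g a + lam / 2 * ‖a‖ ^ 2 ≤ g x + lam / 2 * ‖x‖ ^ 2) (x : E) :
    g a + lam / 2 * ‖a‖ ^ 2 + lam / 2 * ‖x - a‖ ^ 2 ≤ g x + lam / 2 * ‖x‖ ^ 2 := by
  have key : ∀ t ∈ Set.Ioc (0:ℝ) 1,
      g a + lam / 2 * ‖a‖ ^ 2 + lam / 2 * (1 - t) * ‖x - a‖ ^ 2
        ≤ g x + lam / 2 * ‖x‖ ^ 2 := by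
    intro t ht
    obtain ⟨ht0, ht1⟩ := ht
    set m : E := (1 - t) • a + t • x with hm
    have hconv := hg.2 (Set.mem_univ a) (Set.mem_univ x)
      (by linarith : (0:ℝ) ≤ 1 - t) ht0.le (by ring)
    simp only [smul_eq_mul] at hconv
    have hmm := hmin m
    have hmx : m = a + t • (x - a) := by rw [hm]; module
    set p : ℝ := inner ℝ a (x - a) with hp
    have h1 : ‖m‖ ^ 2 = ‖a‖ ^ 2 + 2 * t * p + t ^ 2 * ‖x - a‖ ^ 2 := by
      rw [hmx, @norm_add_sq_real, real_inner_smul_right, norm_smul]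
      simp [abs_of_pos ht0]
      ring
    have hx : a + (x - a) = x := by abel
    have h2 : ‖x‖ ^ 2 = ‖a‖ ^ 2 + 2 * p + ‖x - a‖ ^ 2 := by
      conv_lhs => rw [← hx]
      rw [@norm_add_sq_real, hp]
    rw [h1] at hmm
    have h4 : 0 ≤ t * (g x - g a + lam / 2 * (2 * p + t * ‖x - a‖ ^ 2)) := by
      nlinarith [hmm, hconv]
    have h5 : 0 ≤ g x - g a + lam / 2 * (2 * p + t * ‖x - a‖ ^ 2) := by
      by_contra h
      push_neg at h
      nlinarith [mul_pos ht0 (neg_pos.mpr h)]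
    rw [h2]
    nlinarith [h5]
  have hmem : Set.Ioc (0:ℝ) 1 ∈ 𝓝[>] (0:ℝ) :=
    Ioc_mem_nhdsGT_of_mem (by simp)
  have hten : Tendsto (fun t : ℝ => g a + lam / 2 * ‖a‖ ^ 2 + lam / 2 * (1 - t) * ‖x - a‖ ^ 2)
      (𝓝[>] (0:ℝ)) (𝓝 (g a + lam / 2 * ‖a‖ ^ 2 + lam / 2 * (1 - 0) * ‖x - a‖ ^ 2)) := by
    apply Tendsto.mono_left _ nhdsWithin_le_nhds
    exact (Continuous.tendsto (by continuity) 0)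
  have := le_of_tendsto hten (Filter.eventually_of_mem hmem key)
  simpa using this

private lemma convexOn_sum' {E ι : Type*} [AddCommGroup E] [Module ℝ E]
    (t : Finset ι) (f : ι → E → ℝ) (h : ∀ i ∈ t, ConvexOn ℝ Set.univ (f i)) :
    ConvexOn ℝ Set.univ (fun x => ∑ i ∈ t, f i x) := by
  induction t using Finset.cons_induction with
  | empty => simpa using convexOn_const 0 convex_univ
  | cons i s hi ih =>
    simp only [Finset.sum_cons]
    exact (h i (Finset.mem_cons_self i s)).add
      (ih fun j hj => h j (Finset.mem_cons_of_mem hj))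

private lemma scale_min {E : Type*} [NormedAddCommGroup E]
    (S : E → ℝ) (lam N : ℝ) (hN : 0 < N) (a : E)
    (h : ∀ x, (1 / N) * S a + lam / 2 * ‖a‖ ^ 2 ≤ (1 / N) * S x + lam / 2 * ‖x‖ ^ 2) :
    ∀ x, S a + lam * N / 2 * ‖a‖ ^ 2 ≤ S x + lam * N / 2 * ‖x‖ ^ 2 := by
  intro x
  have h1 := mul_le_mul_of_nonneg_left (h x) hN.le
  have e1 : N * ((1 / N) * S a) = S a := by field_simp
  have e2 : N * ((1 / N) * S x) = S x := by field_simp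
  nlinarith [h1, e1, e2]

/-- Add-one stability of ridge-regularized ERM with convex `G`-Lipschitz losses:
`‖θ̂_{n+1} - θ̂_n‖ ≤ 2G/(λn)`. -/
theorem stmt7 {d : ℕ} {Z : Type*} (n : ℕ) (hn : 0 < n)
    (G lam : ℝ) (hG : 0 ≤ G) (hlam : 0 < lam)
    (z : Fin (n + 1) → Z)
    (ℓ : EuclideanSpace ℝ (Fin d) → Z → ℝ)
    (hconv : ∀ w, ConvexOn ℝ Set.univ (fun θ => ℓ θ w))
    (hlip : ∀ w, LipschitzWith (Real.toNNReal G) (fun θ => ℓ θ w))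
    (Fn Fn1 : EuclideanSpace ℝ (Fin d) → ℝ)
    (hFn : Fn = fun θ =>
      (1 / (n : ℝ)) * ∑ i : Fin n, ℓ θ (z i.castSucc) + lam / 2 * ‖θ‖ ^ 2)
    (hFn1 : Fn1 = fun θ =>
      (1 / ((n : ℝ) + 1)) * ∑ i : Fin (n + 1), ℓ θ (z i) + lam / 2 * ‖θ‖ ^ 2)
    (θn θn1 : EuclideanSpace ℝ (Fin d))
    (hθn : ∀ θ, Fn θn ≤ Fn θ) (hθn1 : ∀ θ, Fn1 θn1 ≤ Fn1 θ) :
    ‖θn1 - θn‖ ≤ 2 * G / (lam * n) := by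
  subst hFn hFn1
  set N : ℝ := (n : ℝ) with hNdef
  have hN : (0:ℝ) < N := by rw [hNdef]; exact_mod_cast hn
  set c : ℝ := ‖θn1 - θn‖ with hc
  -- Lipschitz bound per data point
  have hd : ∀ w (u v : EuclideanSpace ℝ (Fin d)), |ℓ u w - ℓ v w| ≤ G * ‖u - v‖ := by
    intro w u v
    have := (hlip w).dist_le_mul u v
    rwa [Real.dist_eq, dist_eq_norm, Real.coe_toNNReal _ hG] at this
  -- the two sums
  set S : EuclideanSpace ℝ (Fin d) → ℝ := fun θ => ∑ i : Fin n, ℓ θ (z i.castSucc) with hSdef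
  set S1 : EuclideanSpace ℝ (Fin d) → ℝ := fun θ => ∑ i : Fin (n + 1), ℓ θ (z i) with hS1def
  have hS1eq : ∀ θ, S1 θ = S θ + ℓ θ (z (Fin.last n)) := by
    intro θ
    simp [hS1def, hSdef, Fin.sum_univ_castSucc]
  -- convexity of the sums
  have hSconv : ConvexOn ℝ Set.univ S :=
    convexOn_sum' Finset.univ _ (fun i _ => hconv _)
  have hS1conv : ConvexOn ℝ Set.univ S1 :=
    convexOn_sum' Finset.univ _ (fun i _ => hconv _)
  -- scaled minimality
  have hminA : ∀ θ, S θn + lam * N / 2 * ‖θn‖ ^ 2 ≤ S θ + lam * N / 2 * ‖θ‖ ^ 2 :=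
    scale_min S lam N hN θn (fun θ => hθn θ)
  have hminB : ∀ θ, S1 θn1 + lam * (N + 1) / 2 * ‖θn1‖ ^ 2
      ≤ S1 θ + lam * (N + 1) / 2 * ‖θ‖ ^ 2 :=
    scale_min S1 lam (N + 1) (by linarith) θn1 (fun θ => hθn1 θ)
  -- strong-convexity growth at the two minimizers
  have A := growth_aux S hSconv (lam * N) θn
    (by intro x; have := hminA x; linarith [this]) θn1
  have B := growth_aux S1 hS1conv (lam * (N + 1)) θn1
    (by intro x; have := hminB x; linarith [this]) θn
  rw [norm_sub_rev θn θn1] at B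
  rw [hS1eq θn1, hS1eq θn] at B
  -- Lipschitz bounds on the sum differences
  have e1 : S θn1 - S θn ≤ N * (G * c) := by
    have : S θn1 - S θn = ∑ i : Fin n, (ℓ θn1 (z i.castSucc) - ℓ θn (z i.castSucc)) := by
      rw [hSdef]; simp [Finset.sum_sub_distrib]
    rw [this]
    calc ∑ i : Fin n, (ℓ θn1 (z i.castSucc) - ℓ θn (z i.castSucc))
        ≤ ∑ _i : Fin n, G * c :=
          Finset.sum_le_sum fun i _ => le_of_abs_le (hd (z i.castSucc) θn1 θn)
      _ = N * (G * c) := by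
          simp [Finset.sum_const, hNdef]
  have e2 : ℓ θn (z (Fin.last n)) - ℓ θn1 (z (Fin.last n)) ≤ G * c := by
    have := le_of_abs_le (hd (z (Fin.last n)) θn θn1)
    rwa [← norm_sub_rev θn1 θn] at this
  -- combine: multiply A by (N+1), B by N
  have A' := mul_le_mul_of_nonneg_left A (by linarith : (0:ℝ) ≤ N + 1)
  have B' := mul_le_mul_of_nonneg_left B hN.le
  have e2' := mul_le_mul_of_nonneg_left e2 hN.le
  have hfin : lam * c ^ 2 * (N * (N + 1)) ≤ 2 * N * G * c := by
    nlinarith [A', B', e1, e2']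
  -- conclude
  rcases (norm_nonneg (θn1 - θn)).eq_or_lt with hc0 | hc0
  · rw [hc, ← hc0]
    positivity
  · rw [le_div_iff₀ (by positivity : (0:ℝ) < lam * N)]
    nlinarith [hfin, mul_pos hc0 hN, mul_pos (mul_pos hlam (mul_pos hc0 hc0)) hN,
      mul_pos hlam hc0]
end
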